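/- Let f : ℝ → ℝ be continuous with f(x) ≥ ε > 0 for all x, let m ≥ 1 and x_1 < ... < x_m be reals, let G = I_{x_m}^m f (the m-fold iterated integral of f starting at x_m), let L be the Lagrange interpolation polynomial for G at nodes x_1, ..., x_m, and set F = G - L. Then F(x) > 0 for all x > x_m. -/

import Mathlib

open Finset

/-- `iterInt a m f` is the `m`-fold iterated integral `I_a^m f`,
where `I_a f (x) = ∫_a^x f(t) dt`. -/
noncomputable def iterInt (a : ℝ) (m : ℕ) (f : ℝ → ℝ) : ℝ → ℝ :=
  (fun g : ℝ → ℝ => fun x => ∫ t in a..x, g t)^[m] f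

section aux

open Polynomial Set intervalIntegral

lemma iterInt_succ' (a : ℝ) (m : ℕ) (f : ℝ → ℝ) :
    iterInt a (m + 1) f = fun x => ∫ t in a..x, iterInt a m f t := by
  rw [iterInt, Function.iterate_succ_apply']
  rfl

lemma iterInt_continuous (f : ℝ → ℝ) (hf : Continuous f) (a : ℝ) :
    ∀ m, Continuous (iterInt a m f) := by
  intro m
  induction m with
  | zero => exact hf
  | succ m ih =>
    rw [iterInt_succ']
    rw [continuous_iff_continuousAt]
    intro x₀
    exact (integral_hasDerivAt_right (ih.intervalIntegrable a x₀)
      (ih.stronglyMeasurableAtFilter _ _) ih.continuousAt).continuousAt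

lemma iterInt_hasDerivAt (f : ℝ → ℝ) (hf : Continuous f) (a : ℝ) (m : ℕ) (x₀ : ℝ) :
    HasDerivAt (iterInt a (m + 1) f) (iterInt a m f x₀) x₀ := by
  have ih := iterInt_continuous f hf a m
  rw [iterInt_succ']
  exact integral_hasDerivAt_right (ih.intervalIntegrable a x₀)
    (ih.stronglyMeasurableAtFilter _ _) ih.continuousAt

lemma iterInt_differentiable (f : ℝ → ℝ) (hf : Continuous f) (a : ℝ) (m : ℕ) :
    Differentiable ℝ (iterInt a (m + 1) f) :=
  fun x₀ => (iterInt_hasDerivAt f hf a m x₀).differentiableAt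

lemma iterInt_deriv (f : ℝ → ℝ) (hf : Continuous f) (a : ℝ) (m : ℕ) :
    deriv (iterInt a (m + 1) f) = iterInt a m f :=
  funext fun x₀ => (iterInt_hasDerivAt f hf a m x₀).deriv

lemma iterInt_iteratedDeriv (f : ℝ → ℝ) (hf : Continuous f) (a : ℝ) :
    ∀ (k m : ℕ), k ≤ m → iteratedDeriv k (iterInt a m f) = iterInt a (m - k) f := by
  intro k
  induction k with
  | zero => intro m _; simp
  | succ k ih =>
    intro m hkm
    obtain ⟨j, rfl⟩ : ∃ j, m = j + 1 := ⟨m - 1, by omega⟩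
    rw [Nat.succ_sub_succ, iteratedDeriv_succ', iterInt_deriv f hf a j, ih j (by omega)]

lemma sub_poly_iteratedDeriv (g : ℝ → ℝ) (p : ℝ[X]) :
    ∀ k : ℕ, (∀ j, j < k → Differentiable ℝ (iteratedDeriv j g)) →
      iteratedDeriv k (fun t => g t - p.eval t) =
        fun t => iteratedDeriv k g t - (derivative^[k] p).eval t := by
  intro k
  induction k with
  | zero => intro _; simp
  | succ k ih =>
    intro hg
    rw [iteratedDeriv_succ, ih (fun j hj => hg j (by omega)), iteratedDeriv_succ,
      Function.iterate_succ_apply']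
    funext u
    rw [deriv_fun_sub (hg k (by omega) u) (((derivative^[k] p).differentiable) u)]
    simp [Polynomial.deriv (p := derivative^[k] p)]

/-- Key lemma: if `F` is `n+1` times differentiable with everywhere positive
`(n+1)`-st derivative and vanishes at `n+1` increasing points, then it is
positive to the right of the last of them. -/
lemma key_pos : ∀ (n : ℕ) (F : ℝ → ℝ),
    (∀ k, k ≤ n → Differentiable ℝ (iteratedDeriv k F)) →
    (∀ t, 0 < iteratedDeriv (n + 1) F t) →
    ∀ s : Fin (n + 1) → ℝ, StrictMono s → (∀ i, F (s i) = 0) →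
    ∀ t, s (Fin.last n) < t → 0 < F t := by
  intro n
  induction n with
  | zero =>
    intro F _ hpos s _ hz t ht
    have hmono : StrictMono F :=
      strictMono_of_deriv_pos (fun u => by simpa [iteratedDeriv_one] using hpos u)
    calc 0 = F (s (Fin.last 0)) := (hz _).symm
      _ < F t := hmono ht
  | succ n ih =>
    intro F hd hpos s hs hz t ht
    have hF : Differentiable ℝ F := by simpa using hd 0 (Nat.zero_le _)
    have hroll : ∀ i : Fin (n + 1),
        ∃ c ∈ Set.Ioo (s i.castSucc) (s i.succ), deriv F c = 0 := fun i =>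
      exists_deriv_eq_zero (hs (Fin.castSucc_lt_succ : i.castSucc < i.succ)) hF.continuous.continuousOn
        ((hz _).trans (hz _).symm)
    choose c hc hcz using hroll
    have hcs : StrictMono c := by
      rw [Fin.strictMono_iff_lt_succ]
      intro i
      calc c i.castSucc < s i.castSucc.succ := (hc i.castSucc).2
        _ = s i.succ.castSucc := by rw [Fin.succ_castSucc]
        _ < c i.succ := (hc i.succ).1
    have hd' : ∀ k, k ≤ n → Differentiable ℝ (iteratedDeriv k (deriv F)) := by
      intro k hk
      rw [← iteratedDeriv_succ']
      exact hd (k + 1) (by omega)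
    have hpos' : ∀ u, 0 < iteratedDeriv (n + 1) (deriv F) u := by
      intro u
      rw [← iteratedDeriv_succ']
      exact hpos u
    have hderiv_pos : ∀ u, c (Fin.last n) < u → 0 < deriv F u :=
      ih (deriv F) hd' hpos' c hcs hcz
    have hcl : c (Fin.last n) < s (Fin.last (n + 1)) := by
      have h2 := (hc (Fin.last n)).2
      rwa [Fin.succ_last] at h2
    have hmono : StrictMonoOn F (Set.Ici (c (Fin.last n))) :=
      strictMonoOn_of_deriv_pos (convex_Ici _) hF.continuous.continuousOn
        (fun u hu => hderiv_pos u (by simpa [interior_Ici] using hu))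
    calc 0 = F (s (Fin.last (n + 1))) := (hz _).symm
      _ < F t := hmono hcl.le (hcl.trans ht).le ht

end aux

/-- If `f` is continuous with `f ≥ ε > 0`, `G = I_{x_m}^m f`, and `L` is the
Lagrange interpolation polynomial of `G` at the nodes `x 0 < ⋯ < x (m-1)`, then
`F = G - L` is strictly positive to the right of the largest node. -/
theorem stmt_9 (f : ℝ → ℝ) (hf_cont : Continuous f) (ε : ℝ) (hε : 0 < ε)
    (hf : ∀ t : ℝ, ε ≤ f t) (m : ℕ) (hm : 1 ≤ m) (x : Fin m → ℝ) (hx : StrictMono x) :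
    have last : Fin m := ⟨m - 1, by omega⟩
    have G : ℝ → ℝ := iterInt (x last) m f
    have L : ℝ → ℝ := fun t => ∑ k : Fin m, G (x k) * ∏ j ∈ Finset.univ.erase k,
      (t - x j) / (x k - x j)
    ∀ t : ℝ, x last < t → 0 < G t - L t := by
  classical
  obtain ⟨n, rfl⟩ : ∃ n, m = n + 1 := ⟨m - 1, by omega⟩
  intro last G L t ht
  have hlast : last = Fin.last n := rfl
  have hGdef : G = iterInt (x last) (n + 1) f := rfl
  set P : Polynomial ℝ := Lagrange.interpolate Finset.univ x (fun k => G (x k)) with hPdef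
  have hinj : Set.InjOn x ↑(Finset.univ : Finset (Fin (n + 1))) := fun i _ j _ h => hx.injective h
  have hLP : ∀ u : ℝ, L u = P.eval u := by
    intro u
    show (∑ k : Fin (n + 1), G (x k) * ∏ j ∈ Finset.univ.erase k, (u - x j) / (x k - x j)) = _
    rw [hPdef, Lagrange.interpolate_apply, Polynomial.eval_finset_sum]
    refine Finset.sum_congr rfl fun k _ => ?_
    rw [Polynomial.eval_mul, Polynomial.eval_C, Lagrange.basis, Polynomial.eval_prod]
    refine congrArg _ (Finset.prod_congr rfl fun j hj => ?_)
    rw [Lagrange.basisDivisor, Polynomial.eval_mul, Polynomial.eval_C, Polynomial.eval_sub,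
      Polynomial.eval_X, Polynomial.eval_C, div_eq_inv_mul]
  have hdG : ∀ j, j < n + 1 → Differentiable ℝ (iteratedDeriv j G) := by
    intro j hj
    rw [hGdef, iterInt_iteratedDeriv f hf_cont (x last) j (n + 1) (by omega)]
    obtain ⟨i, hi⟩ : ∃ i, n + 1 - j = i + 1 := ⟨n - j, by omega⟩
    rw [hi]
    exact iterInt_differentiable f hf_cont (x last) i
  have hFk : ∀ k, k ≤ n + 1 → iteratedDeriv k (fun v => G v - P.eval v) =
      fun u => iteratedDeriv k G u - ((Polynomial.derivative)^[k] P).eval u := fun k hk =>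
    sub_poly_iteratedDeriv G P k (fun j hj => hdG j (by omega))
  have hd : ∀ k, k ≤ n → Differentiable ℝ (iteratedDeriv k (fun v => G v - P.eval v)) := by
    intro k hk
    rw [hFk k (by omega)]
    exact (hdG k (by omega)).sub (Polynomial.differentiable _)
  have hpos : ∀ u, 0 < iteratedDeriv (n + 1) (fun v => G v - P.eval v) u := by
    intro u
    rw [hFk (n + 1) le_rfl]
    have h1 : iteratedDeriv (n + 1) G = iterInt (x last) 0 f := by
      rw [hGdef, iterInt_iteratedDeriv f hf_cont (x last) (n + 1) (n + 1) le_rfl, Nat.sub_self]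
    have h2 : (Polynomial.derivative)^[n + 1] P = 0 := by
      apply Polynomial.iterate_derivative_eq_zero
      rcases eq_or_ne P 0 with h | h
      · simp [h]
      · have hdeg := Lagrange.degree_interpolate_lt (fun k => G (x k)) hinj
        rw [Polynomial.natDegree_lt_iff_degree_lt h]
        simpa [hPdef] using hdeg
    rw [h1, h2]
    simp only [Polynomial.eval_zero, sub_zero]
    show (0 : ℝ) < f u
    exact lt_of_lt_of_le hε (hf u)
  have hz : ∀ i, (fun v => G v - P.eval v) (x i) = 0 := by
    intro i
    have hnode := Lagrange.eval_interpolate_at_node (fun k => G (x k)) hinj (Finset.mem_univ i)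
    rw [← hPdef] at hnode
    show G (x i) - P.eval (x i) = 0
    rw [hnode, sub_self]
  have hkey := key_pos n (fun v => G v - P.eval v) hd hpos x hx hz t
    (by rw [← hlast]; exact ht)
  have hLt : L t = P.eval t := hLP t
  show 0 < G t - L t
  rw [hLt]
  exact hkey
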